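/- Let λ > 0 and τ ≥ 2, and set α = (λ/2)(1 + 1/τ). There are no functions J : [0,∞) → ℝ twice continuously differentiable and I : [0,∞) → ℝ satisfying all of the following: J(t) ≥ 0 and I(t) ≥ 0 for all t ≥ 0; J'(t) = -(λ/τ) J(t) + (1/τ) I(t) for all t ≥ 0; J''(t) + λ(1 + 1/τ) J'(t) + (λ²/τ) J(t) ≥ (λ²/τ) J(t)² for all t ≥ 0; J(0) ≥ (3/2)τ; and I(0) ≥ (2/3) λ J(0)². -/

import Mathlib

open Set Filter Topology

set_option maxHeartbeats 1000000

private lemma slope_push {f : ℝ → ℝ} {t₁ d : ℝ} (hf : HasDerivAt f d t₁)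
    (h0 : f t₁ = 0) (hd : 0 < d) (ht : 0 < t₁) :
    ∃ s, 0 ≤ s ∧ s < t₁ ∧ f s < 0 := by
  have h := hasDerivAt_iff_tendsto_slope.mp hf
  have h2 : ∀ᶠ s in 𝓝[≠] t₁, 0 < slope f t₁ s := h.eventually (eventually_gt_nhds hd)
  have hmono : 𝓝[<] t₁ ≤ 𝓝[≠] t₁ := nhdsWithin_mono _ fun x hx => ne_of_lt hx
  have h3 : ∀ᶠ s in 𝓝[<] t₁, 0 < slope f t₁ s := h2.filter_mono hmono
  have h4 : Ioo 0 t₁ ∈ 𝓝[<] t₁ := Ioo_mem_nhdsLT_of_mem ⟨ht, le_refl _⟩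
  obtain ⟨s, hs1, hs2⟩ := (h3.and (eventually_of_mem h4 fun x hx => hx)).exists
  refine ⟨s, hs2.1.le, hs2.2, ?_⟩
  have hsl : slope f t₁ s = (f s - f t₁) / (s - t₁) := slope_def_field f t₁ s
  rw [hsl, h0, sub_zero] at hs1
  by_contra hcon
  push_neg at hcon
  have : f s / (s - t₁) ≤ 0 := div_nonpos_of_nonneg_of_nonpos hcon (by linarith [hs2.2])
  linarith

private lemma persist {f : ℝ → ℝ} (hc : Continuous f) (h0 : 0 < f 0)
    (key : ∀ t, 0 < t → f t = 0 → (∀ s, 0 ≤ s → s < t → 0 < f s) →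
      ∃ s, 0 ≤ s ∧ s < t ∧ f s < 0) :
    ∀ t, 0 ≤ t → 0 < f t := by
  by_contra hcon
  push_neg at hcon
  obtain ⟨t₀, ht₀, hft₀⟩ := hcon
  have hBne : (Ici 0 ∩ f ⁻¹' (Iic 0)).Nonempty := ⟨t₀, ht₀, hft₀⟩
  have hBclosed : IsClosed (Ici 0 ∩ f ⁻¹' (Iic 0)) := isClosed_Ici.inter (isClosed_Iic.preimage hc)
  have hBbdd : BddBelow (Ici 0 ∩ f ⁻¹' (Iic 0)) := ⟨0, fun x hx => hx.1⟩
  have ht₁B : sInf (Ici 0 ∩ f ⁻¹' (Iic 0)) ∈ Ici 0 ∩ f ⁻¹' (Iic 0) :=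
    hBclosed.csInf_mem hBne hBbdd
  set t₁ := sInf (Ici 0 ∩ f ⁻¹' (Iic 0)) with ht₁def
  have hpos : ∀ s, 0 ≤ s → s < t₁ → 0 < f s := by
    intro s hs hst
    by_contra hns
    push_neg at hns
    exact absurd (csInf_le hBbdd ⟨hs, hns⟩) (not_le.mpr hst)
  have ht₁0 : 0 < t₁ := by
    rcases lt_or_eq_of_le (Set.mem_Ici.mp ht₁B.1) with h | h
    · exact h
    · exfalso; have := ht₁B.2; rw [← h] at this; exact absurd h0 (not_lt.mpr this)
  have hft₁ : f t₁ = 0 := by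
    refine le_antisymm ht₁B.2 ?_
    have htend : Tendsto f (𝓝[<] t₁) (𝓝 (f t₁)) :=
      (hc.continuousAt.tendsto).mono_left nhdsWithin_le_nhds
    refine ge_of_tendsto htend ?_
    filter_upwards [Ioo_mem_nhdsLT_of_mem (⟨ht₁0, le_refl _⟩ : t₁ ∈ Ioc 0 t₁)] with s hs
    exact (hpos s hs.1.le hs.2).le
  obtain ⟨s, hs0, hst, hfs⟩ := key t₁ ht₁0 hft₁ hpos
  exact absurd (hpos s hs0 hst) (not_lt.mpr hfs.le)

private lemma keyC {lam τ A s B : ℝ} (hlam : 0 < lam) (hτ : 2 ≤ τ)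
    (hA : 3 * τ ≤ 2 * A) (hs : 0 < s) (hsq : 27 * τ * s ^ 2 = 2 * lam ^ 2 * A ^ 3)
    (hB : lam ^ 2 * A ^ 2 ≤ τ * B + lam * (τ + 1) * s + lam ^ 2 * A) :
    0 < 2 * s * B - 2 * lam ^ 2 / (27 * τ) * (3 * A ^ 2 * s) := by
  have hτ0 : (0:ℝ) < τ := by linarith
  have hA3 : (3:ℝ) ≤ A := by nlinarith
  have h6 : 6 * (τ + 1) ^ 2 * A < τ * (8 * A - 9) ^ 2 := by
    nlinarith [mul_nonneg (by linarith : (0:ℝ) ≤ 2*A - 3*τ) (by linarith : (0:ℝ) ≤ τ - 2),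
      mul_nonneg (by linarith : (0:ℝ) ≤ 2*A - 3*τ) (by linarith : (0:ℝ) ≤ A - 3),
      mul_nonneg (by linarith : (0:ℝ) ≤ A - 3) (by linarith : (0:ℝ) ≤ τ - 2),
      mul_pos hτ0 (by linarith : (0:ℝ) < A), sq_nonneg (A - 3), sq_nonneg (2*A - 3*τ)]
  have h9 : 0 < lam * A * (8 * A - 9) := by
    apply mul_pos (mul_pos hlam (by linarith)); linarith
  have hsq2 : (τ+1)^2 * (27 * τ * s ^ 2) = (τ+1)^2 * (2 * lam ^ 2 * A ^ 3) := by rw [hsq]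
  have h6l := mul_lt_mul_of_pos_left h6 (show (0:ℝ) < lam^2 * A^2 by positivity)
  have h10 : τ * (81 * (τ+1)^2 * s^2) < τ * (lam^2 * A^2 * (8*A-9)^2) := by nlinarith [hsq2, h6l]
  have hsqr : (9 * (τ+1) * s) ^ 2 < (lam * A * (8*A-9)) ^ 2 := by
    calc (9 * (τ+1) * s) ^ 2 = 81 * (τ+1)^2 * s^2 := by ring
    _ < lam^2 * A^2 * (8*A-9)^2 := lt_of_mul_lt_mul_left h10 hτ0.le
    _ = (lam * A * (8*A-9)) ^ 2 := by ring
  have h8 : 9 * (τ+1) * s < lam * A * (8*A-9) := lt_of_pow_lt_pow_left₀ 2 h9.le hsqr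
  have hsuff : 2 * lam ^ 2 * (3 * A ^ 2 * s) < 2 * s * B * (27 * τ) := by
    nlinarith [mul_lt_mul_of_pos_left h8 hs, mul_le_mul_of_nonneg_left hB hs.le]
  have : 2 * lam ^ 2 / (27 * τ) * (3 * A ^ 2 * s) < 2 * s * B := by
    rw [div_mul_eq_mul_div, div_lt_iff₀ (by positivity : (0:ℝ) < 27 * τ)]
    linarith [hsuff]
  linarith

theorem stmt_18 (lam τ : ℝ) (hlam : 0 < lam) (hτ : 2 ≤ τ) :
    ¬ ∃ (J I : ℝ → ℝ), ContDiff ℝ 2 J ∧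
      (∀ t : ℝ, 0 ≤ t → 0 ≤ J t) ∧
      (∀ t : ℝ, 0 ≤ t → 0 ≤ I t) ∧
      (∀ t : ℝ, 0 ≤ t → deriv J t = -(lam / τ) * J t + 1 / τ * I t) ∧
      (∀ t : ℝ, 0 ≤ t →
        lam ^ 2 / τ * J t ^ 2 ≤
          deriv (deriv J) t + lam * (1 + 1 / τ) * deriv J t + lam ^ 2 / τ * J t) ∧
      3 / 2 * τ ≤ J 0 ∧
      2 / 3 * lam * J 0 ^ 2 ≤ I 0 := by
  rintro ⟨J, I, hJC, hJnn, hInn, hODE, hIneq, hJ0, hI0⟩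
  have hτ0 : (0:ℝ) < τ := by linarith
  have hτne : τ ≠ 0 := ne_of_gt hτ0
  -- differentiability facts
  have hJC2 : ContDiff ℝ (1 + 1) J := by
    exact_mod_cast hJC
  have hderiv1 : ContDiff ℝ 1 (deriv J) := (contDiff_succ_iff_deriv.mp hJC2).2.2
  have hd1 : Differentiable ℝ J := hJC.differentiable (by norm_num)
  have hd2 : Differentiable ℝ (deriv J) := hderiv1.differentiable one_ne_zero
  have hJd : ∀ t, HasDerivAt J (deriv J t) t := fun t => (hd1 t).hasDerivAt
  have hJd2 : ∀ t, HasDerivAt (deriv J) (deriv (deriv J) t) t := fun t => (hd2 t).hasDerivAt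
  have hcJ' : Continuous (deriv J) := hd2.continuous
  have hy3 : (3:ℝ) ≤ J 0 := by linarith
  -- cleared form of the second-order inequality
  have hIneq2 : ∀ t, 0 ≤ t →
      lam ^ 2 * J t ^ 2 ≤ τ * deriv (deriv J) t + lam * (τ + 1) * deriv J t
        + lam ^ 2 * J t := by
    intro t ht
    have h := mul_le_mul_of_nonneg_left (hIneq t ht) hτ0.le
    have e1 : τ * (lam ^ 2 / τ * J t ^ 2) = lam ^ 2 * J t ^ 2 := by
      field_simp
    have e2 : τ * (deriv (deriv J) t + lam * (1 + 1 / τ) * deriv J t + lam ^ 2 / τ * J t)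
        = τ * deriv (deriv J) t + lam * (τ + 1) * deriv J t + lam ^ 2 * J t := by
      field_simp
    rw [e1, e2] at h
    exact h
  -- derivative at 0 is positive, with quantitative bound
  have hODE0 : τ * deriv J 0 = I 0 - lam * J 0 := by
    rw [hODE 0 le_rfl]; field_simp; ring
  have hP : lam * J 0 * (2 * J 0 - 3) ≤ 3 * τ * deriv J 0 := by nlinarith [hODE0, hI0]
  have hJ'0 : 0 < deriv J 0 := by nlinarith [hP, hy3, mul_pos hlam (by linarith : (0:ℝ) < J 0)]
  -- Step 1: deriv J > 0 on [0,∞)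
  have step1 : ∀ t, 0 ≤ t → 0 < deriv J t := by
    refine persist hcJ' hJ'0 ?_
    intro t ht h0 hpos
    have hmonot : MonotoneOn J (Icc 0 t) := by
      apply monotoneOn_of_deriv_nonneg (convex_Icc 0 t) hd1.continuous.continuousOn
        (fun s _ => (hd1 s).differentiableWithinAt)
      intro s hs
      rw [interior_Icc] at hs
      exact (hpos s hs.1.le hs.2).le
    have hJt3 : (3:ℝ) ≤ J t := le_trans hy3 (hmonot ⟨le_rfl, ht.le⟩ ⟨ht.le, le_rfl⟩ ht.le)
    have hkey := hIneq2 t ht.le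
    rw [h0] at hkey
    have hdd : 0 < deriv (deriv J) t := by
      by_contra hncon
      push_neg at hncon
      have h1 : 0 < lam ^ 2 * (J t ^ 2 - J t) :=
        mul_pos (pow_pos hlam 2) (by nlinarith [sq_nonneg (J t - 3)])
      nlinarith [hkey, h1, mul_nonneg hτ0.le (neg_nonneg.mpr hncon)]
    exact slope_push (hJd2 t) h0 hdd ht
  -- J is monotone on [0,∞)
  have hJmono : MonotoneOn J (Ici 0) := by
    apply monotoneOn_of_deriv_nonneg (convex_Ici 0) hd1.continuous.continuousOn
      (fun s _ => (hd1 s).differentiableWithinAt)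
    intro s hs
    rw [interior_Ici] at hs
    exact (step1 s hs.le).le
  have hJge : ∀ t, 0 ≤ t → J 0 ≤ J t := fun t ht => hJmono self_mem_Ici ht ht
  have hJpos : ∀ t, 0 ≤ t → 0 < J t := fun t ht => lt_of_lt_of_le (by linarith) (hJge t ht)
  -- Step 2: (deriv J)^2 - c J^3 > 0 on [0,∞), c = 2 lam^2/(27 τ)
  have hc : 0 < 2 * lam ^ 2 / (27 * τ) := by positivity
  have hDcont : Continuous (fun t => deriv J t ^ 2 - 2 * lam ^ 2 / (27 * τ) * J t ^ 3) := by
    apply Continuous.sub (hcJ'.pow 2)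
    exact continuous_const.mul (hd1.continuous.pow 3)
  have hDd : ∀ t, HasDerivAt (fun t => deriv J t ^ 2 - 2 * lam ^ 2 / (27 * τ) * J t ^ 3)
      (2 * deriv J t * deriv (deriv J) t
        - 2 * lam ^ 2 / (27 * τ) * (3 * J t ^ 2 * deriv J t)) t := by
    intro t
    have h1 := (hJd2 t).fun_pow 2
    have h2 := ((hJd t).fun_pow 3).const_mul (2 * lam ^ 2 / (27 * τ))
    exact (h1.sub h2).congr_deriv (by push_cast; ring)
  have hD0 : 0 < deriv J 0 ^ 2 - 2 * lam ^ 2 / (27 * τ) * J 0 ^ 3 := by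
    have hPpos : 0 < lam * J 0 * (2 * J 0 - 3) := by
      apply mul_pos (mul_pos hlam (by linarith)); linarith
    have k1 : (lam * J 0 * (2 * J 0 - 3)) ^ 2 ≤ (3 * τ * deriv J 0) ^ 2 :=
      pow_le_pow_left₀ hPpos.le hP 2
    have k2 : 2 * lam ^ 2 * J 0 ^ 3 * τ < 27 * τ ^ 2 * deriv J 0 ^ 2 := by
      nlinarith [k1, sq_nonneg (lam * J 0), mul_pos hlam (by linarith : (0:ℝ) < J 0),
        mul_nonneg (mul_nonneg (sq_nonneg lam) (sq_nonneg (J 0)))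
          (by linarith : (0:ℝ) ≤ 2 * J 0 - 3 * τ),
        mul_nonneg (mul_nonneg (sq_nonneg lam) (sq_nonneg (J 0)))
          (by linarith : (0:ℝ) ≤ J 0 - 3)]
    have k3 : 2 * lam ^ 2 * J 0 ^ 3 < 27 * τ * deriv J 0 ^ 2 := by
      have := lt_of_mul_lt_mul_right (show 2 * lam ^ 2 * J 0 ^ 3 * τ
        < 27 * τ * deriv J 0 ^ 2 * τ by nlinarith [k2]) hτ0.le
      linarith
    rw [sub_pos, div_mul_eq_mul_div, div_lt_iff₀ (by positivity : (0:ℝ) < 27 * τ)]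
    nlinarith [k3]
  have step2 : ∀ t, 0 ≤ t → 0 < deriv J t ^ 2 - 2 * lam ^ 2 / (27 * τ) * J t ^ 3 := by
    refine persist hDcont hD0 ?_
    intro t ht h0 _
    have h0' : deriv J t ^ 2 - 2 * lam ^ 2 / (27 * τ) * J t ^ 3 = 0 := h0
    have hA : 3 * τ ≤ 2 * J t := by linarith [hJge t ht.le]
    have hs : 0 < deriv J t := step1 t ht.le
    have hsq : 27 * τ * deriv J t ^ 2 = 2 * lam ^ 2 * J t ^ 3 := by
      have e : deriv J t ^ 2 = 2 * lam ^ 2 / (27 * τ) * J t ^ 3 := by linarith [h0']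
      rw [e]
      field_simp
    have hdd : 0 < 2 * deriv J t * deriv (deriv J) t
        - 2 * lam ^ 2 / (27 * τ) * (3 * J t ^ 2 * deriv J t) :=
      keyC hlam hτ hA hs hsq (hIneq2 t ht.le)
    exact slope_push (hDd t) h0 hdd ht
  -- Final phase: 1/sqrt(J) decreases at a fixed rate, contradiction
  have hr : 0 < Real.sqrt (2 * lam ^ 2 / (27 * τ)) := Real.sqrt_pos.mpr hc
  have hr2 : Real.sqrt (2 * lam ^ 2 / (27 * τ)) ^ 2 = 2 * lam ^ 2 / (27 * τ) :=
    Real.sq_sqrt hc.le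
  have hFd : ∀ t, 0 ≤ t → HasDerivAt
      (fun u => (Real.sqrt (J u))⁻¹ + Real.sqrt (2 * lam ^ 2 / (27 * τ)) / 2 * u)
      (-(1 / (2 * Real.sqrt (J t)) * deriv J t) / Real.sqrt (J t) ^ 2
        + Real.sqrt (2 * lam ^ 2 / (27 * τ)) / 2 * 1) t := by
    intro t ht
    have hJt := hJpos t ht
    have h1 : HasDerivAt (fun u => Real.sqrt (J u)) (1 / (2 * Real.sqrt (J t)) * deriv J t) t :=
      (Real.hasDerivAt_sqrt (ne_of_gt hJt)).comp t (hJd t)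
    have h2 := h1.inv (ne_of_gt (Real.sqrt_pos.mpr hJt))
    have h3 := (hasDerivAt_id t).const_mul (Real.sqrt (2 * lam ^ 2 / (27 * τ)) / 2)
    exact h2.add h3
  have hFanti : AntitoneOn
      (fun u => (Real.sqrt (J u))⁻¹ + Real.sqrt (2 * lam ^ 2 / (27 * τ)) / 2 * u)
      (Ici 0) := by
    apply antitoneOn_of_deriv_nonpos (convex_Ici 0)
    · intro t ht
      exact (hFd t ht).differentiableAt.continuousAt.continuousWithinAt
    · intro t ht
      rw [interior_Ici] at ht
      exact (hFd t ht.le).differentiableAt.differentiableWithinAt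
    · intro t ht
      rw [interior_Ici] at ht
      have ht' := (Set.mem_Ioi.mp ht).le
      rw [(hFd t ht').deriv]
      have hJt := hJpos t ht'
      have hst : 0 < Real.sqrt (J t) := Real.sqrt_pos.mpr hJt
      have hsq : Real.sqrt (J t) ^ 2 = J t := Real.sq_sqrt hJt.le
      have hs' : 0 < deriv J t := step1 t ht'
      have hDt' : 2 * lam ^ 2 / (27 * τ) * J t ^ 3 ≤ deriv J t ^ 2 := by
        linarith [step2 t ht']
      have hkey : Real.sqrt (2 * lam ^ 2 / (27 * τ)) * Real.sqrt (J t) * J t ≤ deriv J t := by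
        have ha : 0 ≤ Real.sqrt (2 * lam ^ 2 / (27 * τ)) * Real.sqrt (J t) * J t := by positivity
        have hsq2 : (Real.sqrt (2 * lam ^ 2 / (27 * τ)) * Real.sqrt (J t) * J t) ^ 2
            = 2 * lam ^ 2 / (27 * τ) * J t ^ 3 := by
          rw [mul_pow, mul_pow, hr2, hsq]; ring
        nlinarith [hDt', hsq2, hs', ha]
      have e : -(1 / (2 * Real.sqrt (J t)) * deriv J t) / Real.sqrt (J t) ^ 2
          = -(deriv J t / (2 * Real.sqrt (J t) * J t)) := by
        rw [hsq]
        field_simp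
      rw [e]
      have hpos2 : 0 < 2 * Real.sqrt (J t) * J t := by positivity
      have hfin : Real.sqrt (2 * lam ^ 2 / (27 * τ)) / 2
          ≤ deriv J t / (2 * Real.sqrt (J t) * J t) := by
        rw [div_le_div_iff₀ (by norm_num) hpos2]
        nlinarith [hkey]
      linarith
  -- contradiction
  have hs0 : 0 < Real.sqrt (J 0) := Real.sqrt_pos.mpr (hJpos 0 le_rfl)
  have hT : 0 ≤ 2 * (Real.sqrt (J 0))⁻¹ / Real.sqrt (2 * lam ^ 2 / (27 * τ)) := by positivity
  have hFT := hFanti self_mem_Ici hT hT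
  simp only [mul_zero, add_zero] at hFT
  have hTeq : Real.sqrt (2 * lam ^ 2 / (27 * τ)) / 2
      * (2 * (Real.sqrt (J 0))⁻¹ / Real.sqrt (2 * lam ^ 2 / (27 * τ)))
      = (Real.sqrt (J 0))⁻¹ := by
    field_simp
  rw [hTeq] at hFT
  have hvT : 0 < (Real.sqrt (J (2 * (Real.sqrt (J 0))⁻¹ / Real.sqrt (2 * lam ^ 2 / (27 * τ)))))⁻¹ := by
    have := Real.sqrt_pos.mpr (hJpos _ hT)
    positivity
  linarith
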